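/- Convex-sum curvature inequality (Schumacher): Let G_1, ..., G_n be positive smooth functions on an open set C ⊆ ℂ and α_1, ..., α_n > 0 constants. Then, pointwise, i∂∂̄ log(Σ_{j=1}^n j α_j G_j) ≥ (Σ_{j=1}^n j α_j G_j · i∂∂̄ log G_j) / (Σ_{j=1}^n j α_j G_j), where the inequality is between real (1,1)-forms (equivalently, between the corresponding Laplacian densities). -/

import Mathlib

open Finset

/-- The Euclidean Laplacian `Δu = u_xx + u_yy` of `u : ℂ → ℝ`, so that
`i∂∂̄ u = (1/2) Δu · (i dz ∧ dz̄ factor)`. -/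
noncomputable def lap (u : ℂ → ℝ) (z : ℂ) : ℝ :=
  fderiv ℝ (fun w => fderiv ℝ u w 1) z 1
    + fderiv ℝ (fun w => fderiv ℝ u w Complex.I) z Complex.I

section Aux

open Filter Topology

/-- second directional derivative of `log ∘ u`. -/
lemma second_log (u : ℂ → ℝ) {C : Set ℂ} (hC : IsOpen C)
    (hu : ContDiffOn ℝ 2 u C) (hpos : ∀ z ∈ C, 0 < u z) {z : ℂ} (hz : z ∈ C) (v : ℂ) :
    fderiv ℝ (fun w => fderiv ℝ (fun w' => Real.log (u w')) w v) z v
      = fderiv ℝ (fun w => fderiv ℝ u w v) z v / u z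
        - (fderiv ℝ u z v) ^ 2 / (u z) ^ 2 := by
  have hEq : (fun w => fderiv ℝ (fun w' => Real.log (u w')) w v) =ᶠ[𝓝 z]
      (fun w => (u w)⁻¹ * fderiv ℝ u w v) := by
    filter_upwards [hC.mem_nhds hz] with w hw
    have hdu : HasFDerivAt u (fderiv ℝ u w) w :=
      ((hu.contDiffAt (hC.mem_nhds hw)).differentiableAt two_ne_zero).hasFDerivAt
    have hlog : HasFDerivAt (fun w' => Real.log (u w'))
        ((u w)⁻¹ • fderiv ℝ u w) w :=
      (Real.hasDerivAt_log (hpos w hw).ne').comp_hasFDerivAt w hdu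
    rw [hlog.fderiv]
    simp
  rw [hEq.fderiv_eq]
  have hcd : ContDiffAt ℝ 2 u z := hu.contDiffAt (hC.mem_nhds hz)
  have hdu : HasFDerivAt u (fderiv ℝ u z) z :=
    (hcd.differentiableAt two_ne_zero).hasFDerivAt
  have hinv : HasFDerivAt (fun w => (u w)⁻¹)
      ((-((u z) ^ 2)⁻¹) • fderiv ℝ u z) z :=
    (hasDerivAt_inv (hpos z hz).ne').comp_hasFDerivAt z hdu
  have hD : DifferentiableAt ℝ (fun w => fderiv ℝ u w v) z := by
    have h1 : ContDiffAt ℝ 1 (fderiv ℝ u) z := hcd.fderiv_right (by norm_num)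
    exact (((ContinuousLinearMap.apply ℝ ℝ v).contDiff.contDiffAt).comp z h1).differentiableAt
      one_ne_zero
  have hB : HasFDerivAt (fun w => fderiv ℝ u w v)
      (fderiv ℝ (fun w => fderiv ℝ u w v) z) z := hD.hasFDerivAt
  have hmul := hinv.fun_mul hB
  rw [hmul.fderiv]
  have hne : u z ≠ 0 := (hpos z hz).ne'
  simp only [ContinuousLinearMap.add_apply, ContinuousLinearMap.smul_apply, smul_eq_mul]
  field_simp
  ring

/-- second directional derivative of a finite linear combination. -/
lemma second_sum (s : Finset ℕ) (c : ℕ → ℝ) (G : ℕ → ℂ → ℝ) {C : Set ℂ} (hC : IsOpen C)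
    (hG : ∀ j ∈ s, ContDiffOn ℝ 2 (G j) C) {z : ℂ} (hz : z ∈ C) (v : ℂ) :
    fderiv ℝ (fun w => fderiv ℝ (fun w' => ∑ j ∈ s, c j * G j w') w v) z v
      = ∑ j ∈ s, c j * fderiv ℝ (fun w => fderiv ℝ (G j) w v) z v := by
  have hEq : (fun w => fderiv ℝ (fun w' => ∑ j ∈ s, c j * G j w') w v) =ᶠ[𝓝 z]
      (fun w => ∑ j ∈ s, c j * fderiv ℝ (G j) w v) := by
    filter_upwards [hC.mem_nhds hz] with w hw
    have hS : HasFDerivAt (fun w' => ∑ j ∈ s, c j * G j w')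
        (∑ j ∈ s, c j • fderiv ℝ (G j) w) w := by
      apply HasFDerivAt.fun_sum
      intro j hj
      exact (((hG j hj).contDiffAt (hC.mem_nhds hw)).differentiableAt
        two_ne_zero).hasFDerivAt.const_mul (c j)
    rw [hS.fderiv]
    simp
  rw [hEq.fderiv_eq]
  have hS2 : HasFDerivAt (fun w => ∑ j ∈ s, c j * fderiv ℝ (G j) w v)
      (∑ j ∈ s, c j • fderiv ℝ (fun w => fderiv ℝ (G j) w v) z) z := by
    apply HasFDerivAt.fun_sum
    intro j hj
    have hcd : ContDiffAt ℝ 2 (G j) z := (hG j hj).contDiffAt (hC.mem_nhds hz)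
    have hD : DifferentiableAt ℝ (fun w => fderiv ℝ (G j) w v) z := by
      have h1 : ContDiffAt ℝ 1 (fderiv ℝ (G j)) z := hcd.fderiv_right (by norm_num)
      exact (((ContinuousLinearMap.apply ℝ ℝ v).contDiff.contDiffAt).comp z h1).differentiableAt
        one_ne_zero
    exact hD.hasFDerivAt.const_mul (c j)
  rw [hS2.fderiv]
  simp

/-- first directional derivative of a finite linear combination. -/
lemma first_sum (s : Finset ℕ) (c : ℕ → ℝ) (G : ℕ → ℂ → ℝ) {C : Set ℂ} (hC : IsOpen C)
    (hG : ∀ j ∈ s, ContDiffOn ℝ 2 (G j) C) {z : ℂ} (hz : z ∈ C) (v : ℂ) :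
    fderiv ℝ (fun w' => ∑ j ∈ s, c j * G j w') z v
      = ∑ j ∈ s, c j * fderiv ℝ (G j) z v := by
  have hS : HasFDerivAt (fun w' => ∑ j ∈ s, c j * G j w')
      (∑ j ∈ s, c j • fderiv ℝ (G j) z) z := by
    apply HasFDerivAt.fun_sum
    intro j hj
    exact (((hG j hj).contDiffAt (hC.mem_nhds hz)).differentiableAt
      two_ne_zero).hasFDerivAt.const_mul (c j)
  rw [hS.fderiv]
  simp

end Aux

/-- Convex-sum curvature inequality (Schumacher): for positive `C²` functions
`G j` on an open set `C ⊆ ℂ` and positive constants `α j`, pointwise,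
`Δ log(Σ j α j G j) ≥ (Σ j α j G j · Δ log G j)/(Σ j α j G j)`. -/
theorem convex_sum_curvature (n : ℕ) (hn : 1 ≤ n)
    (C : Set ℂ) (hC : IsOpen C)
    (G : ℕ → ℂ → ℝ) (α : ℕ → ℝ)
    (hα : ∀ j ∈ Finset.Icc 1 n, 0 < α j)
    (hG : ∀ j ∈ Finset.Icc 1 n, ContDiffOn ℝ 2 (G j) C)
    (hGpos : ∀ j ∈ Finset.Icc 1 n, ∀ z ∈ C, 0 < G j z) :
    ∀ z ∈ C,
      (∑ j ∈ Finset.Icc 1 n,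
          (j : ℝ) * α j * G j z * lap (fun w => Real.log (G j w)) z)
        / (∑ j ∈ Finset.Icc 1 n, (j : ℝ) * α j * G j z)
      ≤ lap (fun w => Real.log (∑ j ∈ Finset.Icc 1 n, (j : ℝ) * α j * G j w)) z := by
  intro z hz
  set s := Finset.Icc 1 n with hs
  set c : ℕ → ℝ := fun j => (j : ℝ) * α j with hcdef
  have hc : ∀ j ∈ s, 0 < c j := by
    intro j hj
    have h1 : 1 ≤ j := (Finset.mem_Icc.mp hj).1
    have : (0 : ℝ) < (j : ℝ) := by exact_mod_cast Nat.lt_of_lt_of_le Nat.zero_lt_one h1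
    exact mul_pos this (hα j hj)
  -- the sum function
  set S : ℂ → ℝ := fun w => ∑ j ∈ s, c j * G j w with hSdef
  have hScd : ContDiffOn ℝ 2 S C := by
    apply ContDiffOn.sum
    intro j hj
    exact (hG j hj).const_smul (c j)
  have hSpos : ∀ w ∈ C, 0 < S w := by
    intro w hw
    apply Finset.sum_pos
    · intro j hj; exact mul_pos (hc j hj) (hGpos j hj w hw)
    · exact ⟨1, Finset.mem_Icc.mpr ⟨le_rfl, hn⟩⟩
  -- shorthand
  set p : ℕ → ℝ := fun j => fderiv ℝ (G j) z 1 with hp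
  set q : ℕ → ℝ := fun j => fderiv ℝ (G j) z Complex.I with hq
  set A : ℕ → ℝ := fun j => fderiv ℝ (fun w => fderiv ℝ (G j) w 1) z 1
    + fderiv ℝ (fun w => fderiv ℝ (G j) w Complex.I) z Complex.I with hA
  have hlapS : lap (fun w => Real.log (S w)) z
      = (∑ j ∈ s, c j * A j) / S z
        - ((∑ j ∈ s, c j * p j) ^ 2 + (∑ j ∈ s, c j * q j) ^ 2) / (S z) ^ 2 := by
    unfold lap
    rw [second_log S hC hScd hSpos hz 1, second_log S hC hScd hSpos hz Complex.I,
      second_sum s c G hC hG hz 1, second_sum s c G hC hG hz Complex.I,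
      first_sum s c G hC hG hz 1, first_sum s c G hC hG hz Complex.I]
    simp only [hA, mul_add, Finset.sum_add_distrib]
    ring
  have hlapG : ∀ j ∈ s, lap (fun w => Real.log (G j w)) z
      = A j / G j z - (p j ^ 2 + q j ^ 2) / (G j z) ^ 2 := by
    intro j hj
    unfold lap
    rw [second_log (G j) hC (hG j hj) (fun w hw => hGpos j hj w hw) hz 1,
      second_log (G j) hC (hG j hj) (fun w hw => hGpos j hj w hw) hz Complex.I]
    simp only [hA]
    ring
  rw [hlapS]
  have hS0 : 0 < S z := hSpos z hz
  -- rewrite the LHS numerator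
  have hnum : (∑ j ∈ s, (j : ℝ) * α j * G j z * lap (fun w => Real.log (G j w)) z)
      = ∑ j ∈ s, (c j * A j - c j * (p j ^ 2 + q j ^ 2) / G j z) := by
    apply Finset.sum_congr rfl
    intro j hj
    rw [hlapG j hj]
    have hGj : G j z ≠ 0 := (hGpos j hj z hz).ne'
    field_simp [hcdef]
    ring
  have hden : (∑ j ∈ s, (j : ℝ) * α j * G j z) = S z := by
    apply Finset.sum_congr rfl
    intro j hj
    simp [hcdef]
  rw [hnum, hden, Finset.sum_sub_distrib]
  -- Cauchy-Schwarz (Engel form)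
  have key : ((∑ j ∈ s, c j * p j) ^ 2 + (∑ j ∈ s, c j * q j) ^ 2) / S z
      ≤ ∑ j ∈ s, c j * (p j ^ 2 + q j ^ 2) / G j z := by
    have hg : ∀ j ∈ s, 0 < c j * G j z := fun j hj => mul_pos (hc j hj) (hGpos j hj z hz)
    have h1 : (∑ j ∈ s, c j * p j) ^ 2 / S z ≤ ∑ j ∈ s, c j * p j ^ 2 / G j z := by
      have := Finset.sq_sum_div_le_sum_sq_div s (fun j => c j * p j) hg
      calc (∑ j ∈ s, c j * p j) ^ 2 / S z ≤ ∑ j ∈ s, (c j * p j) ^ 2 / (c j * G j z) := this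
        _ = ∑ j ∈ s, c j * p j ^ 2 / G j z := by
            apply Finset.sum_congr rfl
            intro j hj
            have hcj : c j ≠ 0 := (hc j hj).ne'
            have hGj : G j z ≠ 0 := (hGpos j hj z hz).ne'
            field_simp
    have h2 : (∑ j ∈ s, c j * q j) ^ 2 / S z ≤ ∑ j ∈ s, c j * q j ^ 2 / G j z := by
      have := Finset.sq_sum_div_le_sum_sq_div s (fun j => c j * q j) hg
      calc (∑ j ∈ s, c j * q j) ^ 2 / S z ≤ ∑ j ∈ s, (c j * q j) ^ 2 / (c j * G j z) := this
        _ = ∑ j ∈ s, c j * q j ^ 2 / G j z := by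
            apply Finset.sum_congr rfl
            intro j hj
            have hcj : c j ≠ 0 := (hc j hj).ne'
            have hGj : G j z ≠ 0 := (hGpos j hj z hz).ne'
            field_simp
    calc ((∑ j ∈ s, c j * p j) ^ 2 + (∑ j ∈ s, c j * q j) ^ 2) / S z
        = (∑ j ∈ s, c j * p j) ^ 2 / S z + (∑ j ∈ s, c j * q j) ^ 2 / S z := by
          rw [add_div]
      _ ≤ ∑ j ∈ s, c j * p j ^ 2 / G j z + ∑ j ∈ s, c j * q j ^ 2 / G j z :=
          add_le_add h1 h2
      _ = ∑ j ∈ s, c j * (p j ^ 2 + q j ^ 2) / G j z := by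
          rw [← Finset.sum_add_distrib]
          apply Finset.sum_congr rfl
          intro j hj
          field_simp
  -- final algebra
  have expand : (∑ j ∈ s, c j * A j - ∑ j ∈ s, c j * (p j ^ 2 + q j ^ 2) / G j z) / S z
      = (∑ j ∈ s, c j * A j) / S z - (∑ j ∈ s, c j * (p j ^ 2 + q j ^ 2) / G j z) / S z := by
    rw [sub_div]
  rw [expand]
  have h3 : ((∑ j ∈ s, c j * p j) ^ 2 + (∑ j ∈ s, c j * q j) ^ 2) / (S z) ^ 2
      ≤ (∑ j ∈ s, c j * (p j ^ 2 + q j ^ 2) / G j z) / S z := by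
    have e : ((∑ j ∈ s, c j * p j) ^ 2 + (∑ j ∈ s, c j * q j) ^ 2) / (S z) ^ 2
        = (((∑ j ∈ s, c j * p j) ^ 2 + (∑ j ∈ s, c j * q j) ^ 2) / S z) / S z := by
      rw [div_div, ← pow_two]
    rw [e]
    exact (div_le_div_iff_of_pos_right hS0).mpr key
  linarith
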